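/- Let H : k^n → k^n be a polynomial map with H(0)=0 whose linear part vanishes, and suppose there exists an invertible linear map T : k^n → k^n such that the Jacobian matrix of T^{-1} ∘ H ∘ T is strictly upper triangular (as a matrix over k[X_1,…,X_n]). Then JH is strongly nilpotent with some index p ≤ n, i.e. JH(X^{(1)})···JH(X^{(n)}) = 0 for all X^{(1)},…,X^{(n)} ∈ k^n. -/

import Mathlib

open MvPolynomial

/-- Chain rule for `pderiv` of a substitution. -/
lemma pderiv_aeval_chain {k : Type*} [CommRing k] {n : ℕ}
    (φ : Fin n → MvPolynomial (Fin n) k) (j : Fin n) (p : MvPolynomial (Fin n) k) :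
    pderiv j (aeval φ p) = ∑ r : Fin n, aeval φ (pderiv r p) * pderiv j (φ r) := by
  classical
  induction p using MvPolynomial.induction_on with
  | C c => simp
  | add p q hp hq =>
      rw [map_add, map_add, hp, hq, ← Finset.sum_add_distrib]
      exact Finset.sum_congr rfl fun r _ => by simp only [map_add, add_mul]
  | mul_X p i hp =>
      have hsplit : ∀ r : Fin n, aeval φ (pderiv r (p * X i)) * pderiv j (φ r) =
          aeval φ (pderiv r p) * pderiv j (φ r) * φ i +
            (if r = i then aeval φ p * pderiv j (φ i) else 0) := by
        intro r
        rw [pderiv_mul]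
        by_cases h : r = i
        · subst h
          rw [if_pos rfl]
          simp only [pderiv_X_self, mul_one, map_add, map_mul, aeval_X]
          ring
        · simp [pderiv_X_of_ne (Ne.symm h), h, mul_right_comm]
      rw [map_mul, aeval_X, pderiv_mul, hp, Finset.sum_congr rfl (fun r _ => hsplit r),
        Finset.sum_add_distrib, Finset.sum_ite_eq' Finset.univ i, ← Finset.sum_mul]
      simp

/-- Entrywise estimate on products of strictly upper triangular matrices. -/
lemma strict_upper_list_prod {k : Type*} [CommRing k] {n : ℕ}
    (L : List (Matrix (Fin n) (Fin n) k))
    (h : ∀ A ∈ L, ∀ i j : Fin n, (j : ℕ) ≤ i → A i j = 0) :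
    ∀ i j : Fin n, (j : ℕ) < (i : ℕ) + L.length → L.prod i j = 0 := by
  induction L with
  | nil =>
      intro i j hij
      simp only [List.length_nil, Nat.add_zero] at hij
      simp only [List.prod_nil]
      exact Matrix.one_apply_ne (by intro hEq; subst hEq; omega)
  | cons A L ih =>
      intro i j hij
      rw [List.prod_cons, Matrix.mul_apply]
      apply Finset.sum_eq_zero
      intro m _
      by_cases hm : (m : ℕ) ≤ i
      · rw [h A List.mem_cons_self i m hm, zero_mul]
      · rw [ih (fun B hB i j hj => h B (List.mem_cons_of_mem _ hB) i j hj) m j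
          (by simp only [List.length_cons] at hij; omega), mul_zero]

lemma list_prod_conj {k : Type*} [CommRing k] {n : ℕ}
    (T S : Matrix (Fin n) (Fin n) k) (hTS : T * S = 1)
    (L : List (Matrix (Fin n) (Fin n) k)) :
    (L.map fun B => T * B * S).prod = T * L.prod * S := by
  induction L with
  | nil => simp [hTS]
  | cons A L ih =>
      have hST : S * T = 1 := mul_eq_one_comm.mp hTS
      simp only [List.map_cons, List.prod_cons, ih]
      calc (T * A * S) * (T * L.prod * S) = T * (A * (S * T) * L.prod) * S := by
            noncomm_ring
        _ = T * (A * L.prod) * S := by rw [hST, mul_one]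

/-- The Jacobian matrix of the polynomial map `H : k^n → k^n`, evaluated at a point `x ∈ k^n`. -/
noncomputable def jacEval {k : Type*} [Field k] {n : ℕ}
    (H : Fin n → MvPolynomial (Fin n) k) (x : Fin n → k) : Matrix (Fin n) (Fin n) k :=
  Matrix.of fun i j => MvPolynomial.eval x (MvPolynomial.pderiv j (H i))

/-- The conjugate polynomial map `T⁻¹ ∘ H ∘ T` for a linear map (matrix) `T`. -/
noncomputable def conjMap {k : Type*} [Field k] {n : ℕ}
    (H : Fin n → MvPolynomial (Fin n) k) (T : Matrix (Fin n) (Fin n) k) :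
    Fin n → MvPolynomial (Fin n) k :=
  fun i => ∑ j : Fin n, T⁻¹ i j •
    MvPolynomial.aeval (fun m : Fin n => ∑ r : Fin n, T m r • (MvPolynomial.X r :
      MvPolynomial (Fin n) k)) (H j)

lemma eval_aeval' {k : Type*} [Field k] {n : ℕ} (x : Fin n → k)
    (φ : Fin n → MvPolynomial (Fin n) k) (p : MvPolynomial (Fin n) k) :
    eval x (aeval φ p) = eval (fun m => eval x (φ m)) p := by
  rw [aeval_def, MvPolynomial.algebraMap_eq, ← eval_assoc]
  rfl

/-- The Jacobian of the conjugate map is the conjugate of the Jacobian. -/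
lemma jacEval_conjMap {k : Type*} [Field k] {n : ℕ}
    (H : Fin n → MvPolynomial (Fin n) k) (T : Matrix (Fin n) (Fin n) k) (x : Fin n → k) :
    jacEval (conjMap H T) x = T⁻¹ * jacEval H (T.mulVec x) * T := by
  classical
  set φ : Fin n → MvPolynomial (Fin n) k :=
    fun m => ∑ r : Fin n, T m r • (MvPolynomial.X r : MvPolynomial (Fin n) k) with hφ
  have hφeval : ∀ m, eval x (φ m) = T.mulVec x m := by
    intro m
    simp [hφ, Matrix.mulVec, dotProduct, smul_eq_C_mul]
  have hφpd : ∀ m q, pderiv q (φ m) = C (T m q) := by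
    intro m q
    simp [hφ, smul_eq_C_mul, pderiv_X, Pi.single_apply, Finset.mul_sum, mul_ite,
      Finset.sum_ite_eq']
  ext i q
  simp only [jacEval, conjMap, Matrix.of_apply, Matrix.mul_apply, ← hφ]
  rw [map_sum, Finset.sum_congr rfl (fun j _ => by
      rw [Derivation.map_smul, pderiv_aeval_chain] : ∀ j ∈ Finset.univ,
        pderiv q (T⁻¹ i j • aeval φ (H j)) =
        T⁻¹ i j • ∑ r : Fin n, aeval φ (pderiv r (H j)) * pderiv q (φ r)), map_sum]
  have heval : ∀ j, eval x (T⁻¹ i j • ∑ r : Fin n, aeval φ (pderiv r (H j)) * pderiv q (φ r)) =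
      T⁻¹ i j * ∑ r : Fin n, eval (T.mulVec x) (pderiv r (H j)) * T r q := by
    intro j
    rw [smul_eq_C_mul, map_mul, eval_C, map_sum]
    congr 1
    refine Finset.sum_congr rfl fun r _ => ?_
    rw [map_mul, hφpd, eval_C, eval_aeval' x φ]
    simp only [hφeval]
  rw [Finset.sum_congr rfl fun j _ => heval j]
  simp only [Matrix.mul_apply, Matrix.of_apply, Finset.sum_mul, Finset.mul_sum]
  conv_lhs => rw [Finset.sum_comm]
  refine Finset.sum_congr rfl fun r _ => Finset.sum_congr rfl fun j _ => by ring

/-- If `H` has zero constant and linear part and is linearly triangularizable, i.e. there is an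
invertible linear map `T` such that the Jacobian of `T⁻¹ ∘ H ∘ T` is strictly upper triangular,
then `JH` is strongly nilpotent with index at most `n`. -/
theorem linearly_triangularizable_strongly_nilpotent
    {k : Type*} [Field k] [CharZero k] {n : ℕ}
    (H : Fin n → MvPolynomial (Fin n) k)
    (hH2 : ∀ i (β : Fin n →₀ ℕ), (β.sum fun _ m => m) < 2 → MvPolynomial.coeff β (H i) = 0)
    (hT : ∃ T : Matrix (Fin n) (Fin n) k, IsUnit T.det ∧
      ∀ i j : Fin n, j ≤ i → MvPolynomial.pderiv j (conjMap H T i) = 0) :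
    ∀ X : Fin n → (Fin n → k),
      (List.ofFn fun ℓ : Fin n => jacEval H (X ℓ)).prod = 0 := by
  intro X
  obtain ⟨T, hdet, htri⟩ := hT
  have hTS : T * T⁻¹ = 1 := Matrix.mul_nonsing_inv T hdet
  have hST : T⁻¹ * T = 1 := Matrix.nonsing_inv_mul T hdet
  -- the Jacobian of H is a conjugate of the Jacobian of G := conjMap H T
  have hback : ∀ y : Fin n → k,
      jacEval H y = T * jacEval (conjMap H T) (T⁻¹.mulVec y) * T⁻¹ := by
    intro y
    rw [jacEval_conjMap, Matrix.mulVec_mulVec, hTS, Matrix.one_mulVec]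
    calc jacEval H y = (T * T⁻¹) * jacEval H y * (T * T⁻¹) := by rw [hTS]; simp
      _ = T * (T⁻¹ * jacEval H y * T) * T⁻¹ := by noncomm_ring
  -- the Jacobian of G is strictly upper triangular everywhere
  have hGtri : ∀ (z : Fin n → k) (i j : Fin n), (j : ℕ) ≤ (i : ℕ) →
      jacEval (conjMap H T) z i j = 0 := by
    intro z i j hij
    simp [jacEval, htri i j (Fin.le_def.mpr hij)]
  have hGprod : (List.ofFn fun ℓ : Fin n => jacEval (conjMap H T) (T⁻¹.mulVec (X ℓ))).prod = 0 := by
    ext i j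
    have := strict_upper_list_prod
      (List.ofFn fun ℓ : Fin n => jacEval (conjMap H T) (T⁻¹.mulVec (X ℓ)))
      (by
        intro A hA i j hij
        obtain ⟨ℓ, rfl⟩ := List.mem_ofFn.mp hA
        exact hGtri _ i j hij)
      i j (by rw [List.length_ofFn]; omega)
    simpa using this
  have hrw : (List.ofFn fun ℓ : Fin n => jacEval H (X ℓ)) =
      (List.ofFn fun ℓ : Fin n => jacEval (conjMap H T) (T⁻¹.mulVec (X ℓ))).map
        (fun B => T * B * T⁻¹) := by
    rw [List.map_ofFn]
    exact congrArg List.ofFn (funext fun ℓ => hback (X ℓ))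
  rw [hrw, list_prod_conj T T⁻¹ hTS, hGprod, mul_zero, zero_mul]
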